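/- Let γ ∈ [1/2, 1), let T be a finite nonempty set (of 'transitions'), and define m : T^ℕ → (T → ℝ) by m(ξ)(t) = ∑_{j=0}^∞ γ^j · [ξ_j = t]. Then for any two elements t_i, t_j ∈ T and any λ ∈ [0,1], the point λ · m(t_i^ω) + (1-λ) · m(t_j^ω) lies in the image of m, where t^ω denotes the constant sequence at t. -/

import Mathlib

open Filter

/-- Segments between vertex occupancy vectors are realized: for γ ∈ [1/2,1) and
`m ξ t = ∑' j, γ^j · [ξ j = t]`, every convex combination of `m` of two constant
sequences is in the image of `m`. -/
theorem stmt_1 (γ : ℝ) (hγ : 1/2 ≤ γ) (hγ1 : γ < 1)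
    (T : Type*) [Fintype T] [Nonempty T] [DecidableEq T]
    (m : (ℕ → T) → T → ℝ)
    (hm : ∀ ξ t, m ξ t = ∑' j : ℕ, γ^j * (if ξ j = t then (1:ℝ) else 0))
    (ti tj : T) (lam : ℝ) (h0 : 0 ≤ lam) (h1 : lam ≤ 1) :
    ∃ ξ : ℕ → T, m ξ = fun t => lam * m (fun _ => ti) t + (1 - lam) * m (fun _ => tj) t := by
  classical
  have hγ0 : (0:ℝ) < γ := by linarith
  have h1γ : (0:ℝ) < 1 - γ := by linarith
  have hconst : ∀ s t : T, m (fun _ => s) t = if s = t then (1-γ)⁻¹ else 0 := by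
    intro s t
    rw [hm]
    by_cases hst : s = t
    · simp only [hst, if_true, mul_one]
      exact tsum_geometric_of_lt_one hγ0.le hγ1
    · simp [hst]
  by_cases hij : ti = tj
  · subst hij
    exact ⟨fun _ => ti, by funext t; ring⟩
  · set x : ℝ := lam / (1 - γ) with hxdef
    have hx0 : 0 ≤ x := div_nonneg h0 h1γ.le
    let S : ℕ → ℝ := fun n => Nat.rec 0 (fun k s => if s + γ^k ≤ x then s + γ^k else s) n
    have hS0 : S 0 = 0 := rfl
    have hSsucc : ∀ n, S (n+1) = if S n + γ^n ≤ x then S n + γ^n else S n := fun n => rfl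
    have hinv : ∀ n, 0 ≤ x - S n ∧ x - S n ≤ γ^n / (1 - γ) := by
      intro n
      induction n with
      | zero =>
        refine ⟨by simpa [hS0] using hx0, ?_⟩
        simp only [hS0, pow_zero, sub_zero]
        exact (div_le_div_iff_of_pos_right h1γ).mpr h1
      | succ k ih =>
        have hkey : γ^k / (1-γ) - γ^k = γ^(k+1)/(1-γ) := by
          field_simp
          ring
        rw [hSsucc]
        split_ifs with h
        · refine ⟨by linarith, ?_⟩
          have := ih.2
          linarith
        · refine ⟨ih.1, ?_⟩
          have hlt : x < S k + γ^k := not_le.mp h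
          have hge : γ^k ≤ γ^(k+1)/(1-γ) := by
            rw [le_div_iff₀ h1γ, pow_succ]
            nlinarith [pow_nonneg hγ0.le k]
          linarith
    -- S tends to x
    have hpow : Tendsto (fun n : ℕ => γ^n) atTop (nhds 0) :=
      tendsto_pow_atTop_nhds_zero_of_lt_one hγ0.le hγ1
    have hlow : Tendsto (fun n : ℕ => x - γ^n/(1-γ)) atTop (nhds x) := by
      have := (hpow.div_const (1-γ)).const_sub x
      simpa using this
    have hStend : Tendsto S atTop (nhds x) := by
      refine tendsto_of_tendsto_of_tendsto_of_le_of_le hlow tendsto_const_nhds ?_ ?_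
      · intro n; have := (hinv n).2; linarith
      · intro n; have := (hinv n).1; linarith
    set ξ : ℕ → T := fun n => if S n + γ^n ≤ x then ti else tj with hξdef
    set f : ℕ → ℝ := fun n => γ^n * (if ξ n = ti then (1:ℝ) else 0) with hfdef
    have hfS : ∀ n, f n = S (n+1) - S n := by
      intro n
      simp only [hfdef, hξdef, hSsucc]
      by_cases h : S n + γ^n ≤ x
      · rw [if_pos h, if_pos h, if_pos rfl]; ring
      · rw [if_neg h, if_neg h, if_neg (fun hh : tj = ti => hij hh.symm)]; ring
    have hfsum : HasSum f x := by
      have hnn : ∀ n, 0 ≤ f n := by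
        intro n
        apply mul_nonneg (pow_nonneg hγ0.le n)
        split_ifs <;> norm_num
      rw [hasSum_iff_tendsto_nat_of_nonneg hnn]
      have : ∀ n, ∑ k ∈ Finset.range n, f k = S n := by
        intro n
        calc ∑ k ∈ Finset.range n, f k = ∑ k ∈ Finset.range n, (S (k+1) - S k) := by
              exact Finset.sum_congr rfl fun k _ => hfS k
          _ = S n - S 0 := Finset.sum_range_sub S n
          _ = S n := by rw [hS0]; ring
      simpa only [this] using hStend
    set g : ℕ → ℝ := fun n => γ^n * (if ξ n = tj then (1:ℝ) else 0) with hgdef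
    have hgf : ∀ n, g n = γ^n - f n := by
      intro n
      simp only [hgdef, hfdef, hξdef]
      by_cases h : S n + γ^n ≤ x
      · rw [if_pos h, if_pos rfl, if_neg hij]; ring
      · rw [if_neg h, if_pos rfl, if_neg (fun hh : tj = ti => hij hh.symm)]; ring
    have hgsum : HasSum g ((1-γ)⁻¹ - x) := by
      have hgeo : HasSum (fun n : ℕ => γ^n) (1-γ)⁻¹ :=
        hasSum_geometric_of_lt_one hγ0.le hγ1
      have := hgeo.sub hfsum
      simpa only [← hgf] using this
    refine ⟨ξ, ?_⟩
    funext t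
    rw [hm, hconst, hconst]
    by_cases hti : t = ti
    · subst hti
      have : (∑' j : ℕ, γ^j * (if ξ j = t then (1:ℝ) else 0)) = x := hfsum.tsum_eq
      rw [this]
      simp only [if_pos rfl, if_neg hij, hij]
      have hne : ¬ tj = t := fun h => hij h.symm
      rw [if_neg hne]
      rw [hxdef]
      field_simp
      rw [if_pos trivial]
      field_simp
      ring
    · by_cases htj : t = tj
      · subst htj
        have : (∑' j : ℕ, γ^j * (if ξ j = t then (1:ℝ) else 0)) = (1-γ)⁻¹ - x := hgsum.tsum_eq
        rw [this]
        have hne : ¬ ti = t := hij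
        rw [if_neg hne, if_pos rfl, hxdef]
        field_simp
        ring
      · have hz : ∀ j, γ^j * (if ξ j = t then (1:ℝ) else 0) = 0 := by
          intro j
          have : ξ j ≠ t := by
            simp only [hξdef]
            split_ifs
            · exact fun h => hti h.symm
            · exact fun h => htj h.symm
          simp [this]
        rw [tsum_congr hz, tsum_zero]
        have h1 : ¬ ti = t := fun h => hti h.symm
        have h2 : ¬ tj = t := fun h => htj h.symm
        rw [if_neg h1, if_neg h2]
        ring
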